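/- Let V be a finite-dimensional hermitian space of nondegenerate signature (n₋, 0, n₊). Then V contains a subspace of signature (m₋, m₀, m₊) if and only if m₋ ≤ n₋, m₊ ≤ n₊, m₀ ≤ n₋ - m₋, and m₀ ≤ n₊ - m₊. -/

import Mathlib

variable {𝕜 : Type*} [RCLike 𝕜] {V : Type*} [AddCommGroup V] [Module 𝕜 V]

lemma sum_B_sum (B : V →ₗ[𝕜] V →ₗ⋆[𝕜] 𝕜) {ι : Type*} [Fintype ι] (u : ι → V)
    (hortho : ∀ i j, i ≠ j → B (u i) (u j) = 0) (c : ι → 𝕜) :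
    B (∑ i, c i • u i) (∑ j, c j • u j)
      = ∑ i, c i * (starRingEnd 𝕜) (c i) * B (u i) (u i) := by
  have h1 : ∀ i, B (u i) (∑ j, c j • u j) = (starRingEnd 𝕜) (c i) * B (u i) (u i) := by
    intro i
    rw [map_sum, Finset.sum_eq_single i]
    · rw [LinearMap.map_smulₛₗ]; rfl
    · intro j _ hj
      rw [LinearMap.map_smulₛₗ, hortho i j (Ne.symm hj), smul_zero]
    · intro h; exact absurd (Finset.mem_univ i) h
  have h0 : ∀ y, B (∑ i, c i • u i) y = ∑ i, c i * B (u i) y := by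
    intro y
    rw [map_sum, LinearMap.sum_apply]
    exact Finset.sum_congr rfl fun i _ => by rw [map_smul, LinearMap.smul_apply]; rfl
  rw [h0]
  exact Finset.sum_congr rfl fun i _ => by rw [h1 i, mul_assoc]

lemma li_of_dual {ι : Type*} [DecidableEq ι] (v : ι → V) (φ : ι → (V →ₗ[𝕜] 𝕜))
    (h : ∀ i j, φ i (v j) = if i = j then 1 else 0) : LinearIndependent 𝕜 v := by
  rw [linearIndependent_iff']
  intro s g hg i hi
  have h2 := congrArg (φ i) hg
  rw [map_sum, map_zero] at h2
  simp only [map_smul, h, smul_eq_mul, mul_ite, mul_one, mul_zero] at h2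
  rwa [Finset.sum_ite_eq s i g, if_pos hi] at h2

lemma key (B : V →ₗ[𝕜] V →ₗ⋆[𝕜] 𝕜) [FiniteDimensional 𝕜 V]
    {ι κ : Type} [Fintype ι] [Fintype κ] {v : ι → V} {w : κ → V}
    (hv : LinearIndependent 𝕜 v) (hw : LinearIndependent 𝕜 w)
    (hvo : ∀ i j, i ≠ j → B (v i) (v j) = 0)
    (hvd : ∀ i, B (v i) (v i) = -1 ∨ B (v i) (v i) = 0)
    (hwo : ∀ i j, i ≠ j → B (w i) (w j) = 0)
    (hwd : ∀ i, B (w i) (w i) = 1) :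
    Fintype.card ι + Fintype.card κ ≤ Module.finrank 𝕜 V := by
  have hdisj : Submodule.span 𝕜 (Set.range v) ⊓ Submodule.span 𝕜 (Set.range w) = ⊥ := by
    rw [Submodule.eq_bot_iff]
    rintro x ⟨hxv, hxw⟩
    obtain ⟨c, hc⟩ := (Submodule.mem_span_range_iff_exists_fun 𝕜).mp hxv
    obtain ⟨d, hd⟩ := (Submodule.mem_span_range_iff_exists_fun 𝕜).mp hxw
    have h1 : RCLike.re (B x x) ≤ 0 := by
      rw [← hc, sum_B_sum B v hvo, map_sum]
      apply Finset.sum_nonpos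
      intro i _
      rcases hvd i with h | h
      · rw [h, mul_neg_one, map_neg, RCLike.mul_conj, ← RCLike.ofReal_pow, RCLike.ofReal_re]
        simp [neg_nonpos]
      · rw [h, mul_zero, map_zero]
    have h2 : RCLike.re (B x x) = ∑ i, ‖d i‖ ^ 2 := by
      rw [← hd, sum_B_sum B w hwo, map_sum]
      refine Finset.sum_congr rfl fun i _ => ?_
      rw [hwd i, mul_one, RCLike.mul_conj, ← RCLike.ofReal_pow, RCLike.ofReal_re]
    have h3 : ∀ i ∈ Finset.univ, ‖d i‖ ^ 2 = (0:ℝ) := by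
      rw [← Finset.sum_eq_zero_iff_of_nonneg (fun i _ => by positivity)]
      exact le_antisymm (h2 ▸ h1) (Finset.sum_nonneg fun i _ => by positivity)
    rw [← hd]
    refine Finset.sum_eq_zero fun i _ => ?_
    have hd0 : d i = 0 := by
      have := h3 i (Finset.mem_univ i)
      simpa using this
    rw [hd0, zero_smul]
  have hsum := Submodule.finrank_sup_add_finrank_inf_eq
    (Submodule.span 𝕜 (Set.range v)) (Submodule.span 𝕜 (Set.range w))
  rw [hdisj, finrank_bot] at hsum
  have h1 := finrank_span_eq_card hv
  have h2 := finrank_span_eq_card hw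
  calc Fintype.card ι + Fintype.card κ
      = Module.finrank 𝕜 ↥(Submodule.span 𝕜 (Set.range v) ⊔ Submodule.span 𝕜 (Set.range w)) := by
        omega
    _ ≤ Module.finrank 𝕜 V := Submodule.finrank_le _

lemma card_or {α : Type*} [Finite α] (p q : α → Prop) (h : ∀ a, p a → q a → False) :
    Nat.card {x // p x ∨ q x} = Nat.card {x // p x} + Nat.card {x // q x} := by
  classical
  rw [Nat.card_congr (subtypeOrEquiv p q
    (Pi.disjoint_iff.mpr fun a => Prop.disjoint_iff.mpr fun ⟨h1, h2⟩ => h a h1 h2)),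
    Nat.card_sum]

lemma card_split {α : Type*} [Finite α] (p q : α → Prop) (h : ∀ a, p a → q a → False)
    (hall : ∀ a, p a ∨ q a) :
    Nat.card α = Nat.card {x // p x} + Nat.card {x // q x} := by
  rw [← Nat.card_congr (Equiv.subtypeUnivEquiv hall), card_or p q h]

/-- A subspace `W` has signature `(a, z, c)` if it admits an orthonormal basis
(pairwise orthogonal, self-products in `{-1,0,1}`) with `a` vectors of
self-product `-1`, `z` of self-product `0`, and `c` of self-product `1`. -/
def HasSign (B : V →ₗ[𝕜] V →ₗ⋆[𝕜] 𝕜) (W : Submodule 𝕜 V) (a z c : ℕ) : Prop :=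
  ∃ (ι : Type) (_ : Fintype ι) (bW : Module.Basis ι 𝕜 W),
    (∀ i j, i ≠ j → B (bW i : V) (bW j : V) = 0) ∧
    (∀ i, B (bW i : V) (bW i : V) = -1 ∨ B (bW i : V) (bW i : V) = 0 ∨
      B (bW i : V) (bW i : V) = 1) ∧
    Nat.card {i // B (bW i : V) (bW i : V) = -1} = a ∧
    Nat.card {i // B (bW i : V) (bW i : V) = 0} = z ∧
    Nat.card {i // B (bW i : V) (bW i : V) = 1} = c

/-- A nondegenerate hermitian space of signature `(n₋, 0, n₊)` contains a
subspace of signature `(m₋, m₀, m₊)` iff `m₋ ≤ n₋`, `m₊ ≤ n₊`,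
`m₀ ≤ n₋ - m₋` and `m₀ ≤ n₊ - m₊`. -/
theorem stmt_18 [FiniteDimensional 𝕜 V] (B : V →ₗ[𝕜] V →ₗ⋆[𝕜] 𝕜)
    (hB : ∀ x y, B x y = starRingEnd 𝕜 (B y x))
    (nneg npos : ℕ) (hsig : HasSign B ⊤ nneg 0 npos)
    (mneg mzero mpos : ℕ) :
    (∃ W : Submodule 𝕜 V, HasSign B W mneg mzero mpos) ↔
      (mneg ≤ nneg ∧ mpos ≤ npos ∧ mzero ≤ nneg - mneg ∧ mzero ≤ npos - mpos) := by
  classical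
  obtain ⟨ι, hfι, b, hbo, hbd, hbneg, hbzero, hbpos⟩ := hsig
  haveI := hfι
  set b' : Module.Basis ι 𝕜 V := b.map (Submodule.topEquiv) with hb'def
  have hb'c : ∀ i, b' i = (b i : V) := fun i => rfl
  have hz : ∀ i, B (b i : V) (b i : V) ≠ 0 := by
    intro i hi
    have hne : Nat.card {i // B (b i : V) (b i : V) = 0} ≠ 0 :=
      Nat.card_ne_zero.mpr ⟨⟨⟨i, hi⟩⟩, inferInstance⟩
    exact hne hbzero
  have hbd2 : ∀ i, B (b i : V) (b i : V) = -1 ∨ B (b i : V) (b i : V) = 1 := by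
    intro i
    rcases hbd i with h | h | h
    · exact Or.inl h
    · exact absurd h (hz i)
    · exact Or.inr h
  have hm1 : (-1 : 𝕜) ≠ 0 := by norm_num
  have hm2 : (-1 : 𝕜) ≠ 1 := by norm_num
  have hfr : Module.finrank 𝕜 V = nneg + npos := by
    rw [Module.finrank_eq_card_basis b', ← Nat.card_eq_fintype_card,
      card_split (fun i => B (b i : V) (b i : V) = -1) (fun i => B (b i : V) (b i : V) = 1)
        (fun a h1 h2 => hm2 (h1.symm.trans h2)) hbd2, hbneg, hbpos]
  have hlib : LinearIndependent 𝕜 (fun i : ι => (b i : V)) :=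
    b.linearIndependent.map' (⊤ : Submodule 𝕜 V).subtype (Submodule.ker_subtype _)
  constructor
  · rintro ⟨W, ιW, hfW, bW, hWo, hWd, hWneg, hWzero, hWpos⟩
    haveI := hfW
    have hliW : LinearIndependent 𝕜 (fun i : ιW => (bW i : V)) :=
      bW.linearIndependent.map' W.subtype (Submodule.ker_subtype _)
    have key1 := key B
      (v := fun i : {i : ιW // B (bW i : V) (bW i : V) = -1 ∨ B (bW i : V) (bW i : V) = 0} =>
        ((bW i.1 : V)))
      (w := fun i : {i : ι // B (b i : V) (b i : V) = 1} => ((b i.1 : V)))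
      (hliW.comp Subtype.val Subtype.val_injective)
      (hlib.comp Subtype.val Subtype.val_injective)
      (fun i j hij => hWo i.1 j.1 (fun h => hij (Subtype.ext h)))
      (fun i => i.2)
      (fun i j hij => hbo i.1 j.1 (fun h => hij (Subtype.ext h)))
      (fun i => i.2)
    rw [← Nat.card_eq_fintype_card, ← Nat.card_eq_fintype_card,
      card_or _ _ (fun a h1 h2 => hm1 (h1.symm.trans h2)), hWneg, hWzero, hbpos, hfr] at key1
    have key2 := key (-B)
      (v := fun i : {i : ιW // B (bW i : V) (bW i : V) = 1 ∨ B (bW i : V) (bW i : V) = 0} =>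
        ((bW i.1 : V)))
      (w := fun i : {i : ι // B (b i : V) (b i : V) = -1} => ((b i.1 : V)))
      (hliW.comp Subtype.val Subtype.val_injective)
      (hlib.comp Subtype.val Subtype.val_injective)
      (fun i j hij => by
        simp only [LinearMap.neg_apply]
        rw [hWo i.1 j.1 (fun h => hij (Subtype.ext h)), neg_zero])
      (fun i => by
        simp only [LinearMap.neg_apply]
        rcases i.2 with h | h
        · rw [h]; left; rfl
        · rw [h]; right; exact neg_zero)
      (fun i j hij => by
        simp only [LinearMap.neg_apply]
        rw [hbo i.1 j.1 (fun h => hij (Subtype.ext h)), neg_zero])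
      (fun i => by
        simp only [LinearMap.neg_apply]
        rw [i.2]; exact neg_neg 1)
    rw [← Nat.card_eq_fintype_card, ← Nat.card_eq_fintype_card,
      card_or _ _ (fun a h1 h2 => one_ne_zero (h1.symm.trans h2)), hWpos, hWzero, hbneg, hfr] at key2
    refine ⟨by omega, by omega, by omega, by omega⟩
  · rintro ⟨h1, h2, h3, h4⟩
    have hn : mneg + mzero ≤ nneg := by omega
    have hp : mpos + mzero ≤ npos := by omega
    obtain ⟨e₁⟩ : Nonempty (Fin (mneg + mzero) ↪ {i : ι // B (b i : V) (b i : V) = -1}) := by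
      apply Function.Embedding.nonempty_of_card_le
      rw [Fintype.card_fin, ← Nat.card_eq_fintype_card, hbneg]
      exact hn
    obtain ⟨e₂⟩ : Nonempty (Fin (mpos + mzero) ↪ {i : ι // B (b i : V) (b i : V) = 1}) := by
      apply Function.Embedding.nonempty_of_card_le
      rw [Fintype.card_fin, ← Nat.card_eq_fintype_card, hbpos]
      exact hp
    have hne12 : ∀ (a : Fin (mneg + mzero)) (c : Fin (mpos + mzero)), (e₁ a).1 ≠ (e₂ c).1 := by
      intro a c h
      have ha := (e₁ a).2
      rw [h] at ha
      exact hm2 (((e₂ c).2).symm.trans ha).symm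
    have he1 : ∀ a c, ((e₁ a).1 = (e₁ c).1) ↔ a = c :=
      fun a c => ⟨fun h => e₁.injective (Subtype.ext h), fun h => by rw [h]⟩
    have he2 : ∀ a c, ((e₂ a).1 = (e₂ c).1) ↔ a = c :=
      fun a c => ⟨fun h => e₂.injective (Subtype.ext h), fun h => by rw [h]⟩
    set n : Fin (mneg + mzero) → V := fun k => b' (e₁ k).1 with hndef
    set p : Fin (mpos + mzero) → V := fun k => b' (e₂ k).1 with hpdef
    have Bnn : ∀ i j, B (n i) (n j) = if i = j then -1 else 0 := by
      intro i j
      by_cases h : i = j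
      · subst h
        rw [if_pos rfl]
        exact (e₁ i).2
      · rw [if_neg h]
        exact hbo _ _ (fun hh => h ((he1 i j).mp hh))
    have Bpp : ∀ i j, B (p i) (p j) = if i = j then 1 else 0 := by
      intro i j
      by_cases h : i = j
      · subst h
        rw [if_pos rfl]
        exact (e₂ i).2
      · rw [if_neg h]
        exact hbo _ _ (fun hh => h ((he2 i j).mp hh))
    have Bnp : ∀ i j, B (n i) (p j) = 0 := fun i j => hbo _ _ (hne12 i j)
    have Bpn : ∀ i j, B (p i) (n j) = 0 := fun i j => hbo _ _ (fun h => hne12 j i h.symm)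
    have hcnd : ∀ {N : ℕ} (k : Fin N) (l : Fin mzero),
        Fin.castAdd mzero k ≠ Fin.natAdd N l := by
      intro N k l h
      have hk := k.2
      have := congrArg Fin.val h
      simp [Fin.castAdd, Fin.natAdd] at this
      omega
    have hnainj : ∀ {N m : ℕ} (k l : Fin N), Fin.natAdd m k = Fin.natAdd m l → k = l := by
      intro N m k l h
      have := congrArg Fin.val h
      simp [Fin.natAdd] at this
      exact Fin.ext (by omega)
    set v : Fin mneg ⊕ Fin mzero ⊕ Fin mpos → V := fun j =>
      match j with
      | .inl k => n (Fin.castAdd mzero k)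
      | .inr (.inl k) => n (Fin.natAdd mneg k) + p (Fin.natAdd mpos k)
      | .inr (.inr k) => p (Fin.castAdd mzero k) with hvdef
    have hval : ∀ j, B (v j) (v j) =
        (match j with | .inl _ => (-1 : 𝕜) | .inr (.inl _) => 0 | .inr (.inr _) => 1) := by
      rintro (k | k | k)
      · simp only [hvdef]
        rw [Bnn, if_pos rfl]
      · simp only [hvdef, map_add, LinearMap.add_apply]
        rw [Bnn, if_pos rfl, Bpp, if_pos rfl, Bnp, Bpn]
        ring
      · simp only [hvdef]
        rw [Bpp, if_pos rfl]
    have hvo : ∀ i j, i ≠ j → B (v i) (v j) = 0 := by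
      rintro (k | k | k) (l | l | l) hne
      · simp only [hvdef]
        rw [Bnn, if_neg (fun h => hne (by rw [Fin.castAdd_inj.mp h]))]
      · simp only [hvdef, map_add]
        rw [Bnn, Bnp, if_neg (hcnd k l), add_zero]
      · simp only [hvdef]
        exact Bnp _ _
      · simp only [hvdef, map_add, LinearMap.add_apply]
        rw [Bnn, Bpn, if_neg (fun h => hcnd l k h.symm), add_zero]
      · simp only [hvdef, map_add, LinearMap.add_apply]
        rw [Bnn, Bpp, Bnp, Bpn,
          if_neg (fun h => hne (by rw [hnainj _ _ h])),
          if_neg (fun h => hne (by rw [hnainj _ _ h]))]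
        ring
      · simp only [hvdef, map_add, LinearMap.add_apply]
        rw [Bnp, Bpp, if_neg (fun h => hcnd l k h.symm)]
        ring
      · simp only [hvdef]
        exact Bpn _ _
      · simp only [hvdef, map_add]
        rw [Bpn, Bpp, if_neg (hcnd k l)]
        ring
      · simp only [hvdef]
        rw [Bpp, if_neg (fun h => hne (by rw [Fin.castAdd_inj.mp h]))]
    set u : Fin mneg ⊕ Fin mzero ⊕ Fin mpos → ι := fun j =>
      match j with
      | .inl k => (e₁ (Fin.castAdd mzero k)).1
      | .inr (.inl k) => (e₁ (Fin.natAdd mneg k)).1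
      | .inr (.inr k) => (e₂ (Fin.castAdd mzero k)).1 with hudef
    have hcoord : ∀ (i t : ι), b'.coord i (b' t) = if t = i then 1 else 0 := by
      intro i t
      rw [Module.Basis.coord_apply, b'.repr_self_apply]
    have hdual : ∀ i j, b'.coord (u i) (v j) = if i = j then 1 else 0 := by
      rintro (k | k | k) (l | l | l) <;>
        simp only [hvdef, hudef, hndef, hpdef, map_add]
      · rw [hcoord]
        by_cases h : k = l
        · subst h
          rw [if_pos rfl, if_pos rfl]
        · rw [if_neg (fun hh => h (Fin.castAdd_inj.mp ((he1 _ _).mp hh)).symm),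
            if_neg (fun hh => h (Sum.inl.inj hh))]
      · rw [hcoord, hcoord, if_neg (fun h => hcnd k l ((he1 _ _).mp h).symm),
          if_neg (fun h => hne12 _ _ h.symm)]
        simp
      · rw [hcoord, if_neg (fun h => hne12 _ _ h.symm)]
        simp
      · rw [hcoord, if_neg (fun h => hcnd l k ((he1 _ _).mp h))]
        simp
      · rw [hcoord, hcoord,
          if_neg (show ¬((e₂ (Fin.natAdd mpos l)).1 = (e₁ (Fin.natAdd mneg k)).1) from
            fun h => hne12 _ _ h.symm)]
        by_cases h : k = l
        · subst h
          rw [if_pos rfl]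
          simp
        · rw [if_neg (fun hh => h (hnainj _ _ ((he1 _ _).mp hh)).symm)]
          simp [h]
      · rw [hcoord, if_neg (fun h => hne12 _ _ h.symm)]
        simp
      · rw [hcoord, if_neg (fun h => hne12 _ _ h)]
        simp
      · rw [hcoord, hcoord, if_neg (fun h => hne12 _ _ h),
          if_neg (fun h => hcnd k l ((he2 _ _).mp h).symm)]
        simp
      · rw [hcoord]
        by_cases h : k = l
        · subst h
          rw [if_pos rfl, if_pos rfl]
        · rw [if_neg (fun hh => h (Fin.castAdd_inj.mp ((he2 _ _).mp hh)).symm),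
            if_neg (fun hh => h (by simpa using hh))]
    have hli : LinearIndependent 𝕜 v := li_of_dual v (fun j => b'.coord (u j)) hdual
    have hsp : ∀ j, ((Module.Basis.span hli j : Submodule.span 𝕜 (Set.range v)) : V) = v j :=
      fun j => congrArg Subtype.val (Module.Basis.span_apply hli j)
    refine ⟨Submodule.span 𝕜 (Set.range v),
      Fin mneg ⊕ Fin mzero ⊕ Fin mpos, inferInstance, Module.Basis.span hli, ?_, ?_, ?_, ?_, ?_⟩
    · intro i j hij
      rw [hsp, hsp]
      exact hvo i j hij
    · rintro (k | k | k)
      · exact Or.inl (by rw [hsp]; exact hval (Sum.inl k))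
      · exact Or.inr (Or.inl (by rw [hsp]; exact hval (Sum.inr (Sum.inl k))))
      · exact Or.inr (Or.inr (by rw [hsp]; exact hval (Sum.inr (Sum.inr k))))
    · rw [Nat.card_congr (Equiv.subtypeEquivRight
        (q := fun j => B (v j) (v j) = -1) (fun j => by rw [hsp j]))]
      rw [← Nat.card_eq_of_bijective
        (fun k : Fin mneg => (⟨Sum.inl k, hval (Sum.inl k)⟩ : {j // B (v j) (v j) = -1})) ?_,
        Nat.card_eq_fintype_card, Fintype.card_fin]
      constructor
      · intro a c h
        simpa using congrArg Subtype.val h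
      · rintro ⟨(k | k | k), hk⟩
        · exact ⟨k, rfl⟩
        · have h0 : (0 : 𝕜) = -1 := (hval (Sum.inr (Sum.inl k))).symm.trans hk
          exact absurd h0 (by norm_num)
        · have h0 : (1 : 𝕜) = -1 := (hval (Sum.inr (Sum.inr k))).symm.trans hk
          exact absurd h0 (by norm_num)
    · rw [Nat.card_congr (Equiv.subtypeEquivRight
        (q := fun j => B (v j) (v j) = 0) (fun j => by rw [hsp j]))]
      rw [← Nat.card_eq_of_bijective
        (fun k : Fin mzero =>
          (⟨Sum.inr (Sum.inl k), hval (Sum.inr (Sum.inl k))⟩ : {j // B (v j) (v j) = 0})) ?_,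
        Nat.card_eq_fintype_card, Fintype.card_fin]
      constructor
      · intro a c h
        simpa using congrArg Subtype.val h
      · rintro ⟨(k | k | k), hk⟩
        · have h0 : (-1 : 𝕜) = 0 := (hval (Sum.inl k)).symm.trans hk
          exact absurd h0 (by norm_num)
        · exact ⟨k, rfl⟩
        · have h0 : (1 : 𝕜) = 0 := (hval (Sum.inr (Sum.inr k))).symm.trans hk
          exact absurd h0 (by norm_num)
    · rw [Nat.card_congr (Equiv.subtypeEquivRight
        (q := fun j => B (v j) (v j) = 1) (fun j => by rw [hsp j]))]
      rw [← Nat.card_eq_of_bijective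
        (fun k : Fin mpos =>
          (⟨Sum.inr (Sum.inr k), hval (Sum.inr (Sum.inr k))⟩ : {j // B (v j) (v j) = 1})) ?_,
        Nat.card_eq_fintype_card, Fintype.card_fin]
      constructor
      · intro a c h
        simpa using congrArg Subtype.val h
      · rintro ⟨(k | k | k), hk⟩
        · have h0 : (-1 : 𝕜) = 1 := (hval (Sum.inl k)).symm.trans hk
          exact absurd h0 (by norm_num)
        · have h0 : (0 : 𝕜) = 1 := (hval (Sum.inr (Sum.inl k))).symm.trans hk
          exact absurd h0 (by norm_num)
        · exact ⟨k, rfl⟩
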